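/- Let Φ be an n×d real matrix and let q, s, l be index sets with l disjoint from both q and s, and with max{δ_{|s|+|l|}, δ_{|q|+|l|}} < 1. Let P{Φ_l} denote the orthogonal projection onto the column span of Φ_l. Then for any a ∈ R^{|s|}, ‖Φ_qᵀ P{Φ_l} Φ_s a‖₂ ≤ (δ_{|s|+|l|} · δ_{|q|+|l|} / (1 − δ_{|l|})) ‖a‖₂. -/

import Mathlib

open Matrix Finset

noncomputable section

/-- Number of nonzero entries of a vector. -/
def sparsity {d : ℕ} (x : Fin d → ℝ) : ℕ :=
  (Finset.univ.filter fun i => x i ≠ 0).card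

/-- Squared Euclidean norm. -/
def nsq {k : Type*} [Fintype k] (v : k → ℝ) : ℝ := ∑ i, v i ^ 2

/-- Euclidean (ℓ₂) norm. -/
def l2 {k : Type*} [Fintype k] (v : k → ℝ) : ℝ := Real.sqrt (nsq v)

/-- `Φ` satisfies the order-`t` restricted isometry property with constant `δ`. -/
def satRIP {n d : ℕ} (Φ : Matrix (Fin n) (Fin d) ℝ) (t : ℕ) (δ : ℝ) : Prop :=
  ∀ x : Fin d → ℝ, sparsity x ≤ t →
    (1 - δ) * nsq x ≤ nsq (Φ.mulVec x) ∧ nsq (Φ.mulVec x) ≤ (1 + δ) * nsq x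

/-- The order-`t` RIP constant of `Φ` : the smallest `δ ≥ 0` satisfying the RIP bounds. -/
def ripConst {n d : ℕ} (Φ : Matrix (Fin n) (Fin d) ℝ) (t : ℕ) : ℝ :=
  sInf {δ : ℝ | 0 ≤ δ ∧ satRIP Φ t δ}

/-- The submatrix of `Φ` consisting of the columns indexed by `s`. -/
def cols {n d : ℕ} (Φ : Matrix (Fin n) (Fin d) ℝ) (s : Finset (Fin d)) :
    Matrix (Fin n) {i // i ∈ s} ℝ := Φ.submatrix id (fun i => (i : Fin d))

/-- Orthogonal projection `P{Φ_s} = Φ_s (Φ_sᵀ Φ_s)⁻¹ Φ_sᵀ` onto the column span of `Φ_s`. -/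
def proj {n d : ℕ} (Φ : Matrix (Fin n) (Fin d) ℝ) (s : Finset (Fin d)) :
    Matrix (Fin n) (Fin n) ℝ :=
  cols Φ s * ((cols Φ s)ᵀ * cols Φ s)⁻¹ * (cols Φ s)ᵀ

/-- Least-squares residual `v^{⊥s} = (I - P{Φ_s}) v`. -/
def residVec {n d : ℕ} (Φ : Matrix (Fin n) (Fin d) ℝ) (s : Finset (Fin d)) (y : Fin n → ℝ) :
    Fin n → ℝ := y - (proj Φ s).mulVec y

/-- The `i`-th column of `Φ`. -/
def col {n d : ℕ} (Φ : Matrix (Fin n) (Fin d) ℝ) (i : Fin d) : Fin n → ℝ := fun k => Φ k i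

/-- `x` is a least-squares estimate of `y` supported on `s`:
it is supported on `s` and minimizes `‖y - Φ z‖₂` over all `z` supported on `s`. -/
def leastSq {n d : ℕ} (Φ : Matrix (Fin n) (Fin d) ℝ) (y : Fin n → ℝ) (s : Finset (Fin d))
    (x : Fin d → ℝ) : Prop :=
  (∀ i, i ∉ s → x i = 0) ∧
  ∀ z : Fin d → ℝ, (∀ i, i ∉ s → z i = 0) → nsq (y - Φ.mulVec x) ≤ nsq (y - Φ.mulVec z)

/-- The support of a vector, as a `Finset`. -/
def spt {d : ℕ} (x : Fin d → ℝ) : Finset (Fin d) :=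
  Finset.univ.filter fun i => x i ≠ 0

-- ### auxiliary lemmas ###


lemma nsq_nonneg {k : Type*} [Fintype k] (v : k → ℝ) : 0 ≤ nsq v :=
  Finset.sum_nonneg fun _ _ => sq_nonneg _

lemma nsq_eq_dot {k : Type*} [Fintype k] (v : k → ℝ) : nsq v = v ⬝ᵥ v := by
  simp [nsq, dotProduct, sq]

lemma l2_nonneg {k : Type*} [Fintype k] (v : k → ℝ) : 0 ≤ l2 v := Real.sqrt_nonneg _

lemma l2_sq {k : Type*} [Fintype k] (v : k → ℝ) : l2 v ^ 2 = nsq v :=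
  Real.sq_sqrt (nsq_nonneg v)

lemma nsq_eq_zero_iff {k : Type*} [Fintype k] {v : k → ℝ} : nsq v = 0 ↔ v = 0 := by
  constructor
  · intro h
    funext i
    have := (Finset.sum_eq_zero_iff_of_nonneg (fun j _ => sq_nonneg (v j))).mp h i (Finset.mem_univ i)
    exact pow_eq_zero_iff (two_ne_zero) |>.mp this
  · intro h; simp [h, nsq]

lemma l2_eq_zero_iff {k : Type*} [Fintype k] {v : k → ℝ} : l2 v = 0 ↔ v = 0 := by
  rw [l2, Real.sqrt_eq_zero (nsq_nonneg v), nsq_eq_zero_iff]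

lemma cauchy {k : Type*} [Fintype k] (v w : k → ℝ) : v ⬝ᵥ w ≤ l2 v * l2 w := by
  have h := Finset.sum_mul_sq_le_sq_mul_sq Finset.univ v w
  calc v ⬝ᵥ w ≤ |v ⬝ᵥ w| := le_abs_self _
    _ = Real.sqrt ((v ⬝ᵥ w) ^ 2) := (Real.sqrt_sq_eq_abs _).symm
    _ ≤ Real.sqrt (nsq v * nsq w) := Real.sqrt_le_sqrt (by simpa [dotProduct, nsq] using h)
    _ = l2 v * l2 w := Real.sqrt_mul (nsq_nonneg v) _

lemma nsq_smul {k : Type*} [Fintype k] (c : ℝ) (v : k → ℝ) : nsq (c • v) = c ^ 2 * nsq v := by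
  simp [nsq, mul_pow, Finset.mul_sum]

lemma nsq_add_sub {k : Type*} [Fintype k] (u v : k → ℝ) :
    nsq (u + v) - nsq (u - v) = 4 * (u ⬝ᵥ v) := by
  simp only [nsq_eq_dot, dotProduct_add, add_dotProduct, dotProduct_sub, sub_dotProduct,
    dotProduct_comm v u]
  ring

-- embedding of vectors supported on a finset
def extv {d : ℕ} (s : Finset (Fin d)) (a : {i // i ∈ s} → ℝ) : Fin d → ℝ :=
  fun i => if h : i ∈ s then a ⟨i, h⟩ else 0

lemma extv_coe {d : ℕ} {s : Finset (Fin d)} (a : {i // i ∈ s} → ℝ) (j : {i // i ∈ s}) :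
    extv s a (j : Fin d) = a j := by
  simp [extv, j.2]

lemma extv_notmem {d : ℕ} {s : Finset (Fin d)} (a : {i // i ∈ s} → ℝ) {j : Fin d}
    (h : j ∉ s) : extv s a j = 0 := by simp [extv, h]

lemma mulVec_extv {n d : ℕ} (Φ : Matrix (Fin n) (Fin d) ℝ) (s : Finset (Fin d))
    (a : {i // i ∈ s} → ℝ) : Φ.mulVec (extv s a) = (cols Φ s).mulVec a := by
  funext i
  show ∑ j, Φ i j * extv s a j = ∑ j : {x // x ∈ s}, Φ i (j : Fin d) * a j
  rw [← Finset.sum_subset s.subset_univ (by intro j _ hj; simp [extv_notmem a hj])]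
  rw [← Finset.sum_coe_sort s (fun j => Φ i j * extv s a j)]
  exact Finset.sum_congr rfl fun j _ => by rw [extv_coe]

lemma dot_extv_same {d : ℕ} {s : Finset (Fin d)} (a b : {i // i ∈ s} → ℝ) :
    extv s a ⬝ᵥ extv s b = a ⬝ᵥ b := by
  show ∑ j, extv s a j * extv s b j = ∑ j : {x // x ∈ s}, a j * b j
  rw [← Finset.sum_subset s.subset_univ (by intro j _ hj; simp [extv_notmem a hj])]
  rw [← Finset.sum_coe_sort s (fun j => extv s a j * extv s b j)]
  exact Finset.sum_congr rfl fun j _ => by rw [extv_coe, extv_coe]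

lemma nsq_extv {d : ℕ} {s : Finset (Fin d)} (a : {i // i ∈ s} → ℝ) :
    nsq (extv s a) = nsq a := by
  rw [nsq_eq_dot, nsq_eq_dot, dot_extv_same]

lemma dot_extv_disj {d : ℕ} {s l : Finset (Fin d)} (h : Disjoint s l)
    (a : {i // i ∈ s} → ℝ) (b : {i // i ∈ l} → ℝ) : extv s a ⬝ᵥ extv l b = 0 := by
  apply Finset.sum_eq_zero; intro j _
  by_cases hs : j ∈ s
  · have hl : j ∉ l := fun hl => (Finset.disjoint_left.mp h hs hl)
    simp [extv_notmem b hl]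
  · simp [extv_notmem a hs]

lemma sparsity_le {d : ℕ} {x : Fin d → ℝ} {s : Finset (Fin d)}
    (h : ∀ i, i ∉ s → x i = 0) : sparsity x ≤ s.card := by
  unfold sparsity
  apply Finset.card_le_card
  intro i hi
  rw [Finset.mem_filter] at hi
  by_contra hs; exact hi.2 (h i hs)

lemma sparsity_extv_add {d : ℕ} (s l : Finset (Fin d)) (a : {i // i ∈ s} → ℝ)
    (b : {i // i ∈ l} → ℝ) : sparsity (extv s a + extv l b) ≤ s.card + l.card := by
  refine le_trans (sparsity_le (s := s ∪ l) ?_) (Finset.card_union_le s l)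
  intro i hi
  rw [Finset.mem_union] at hi; push_neg at hi
  simp [Pi.add_apply, extv_notmem a hi.1, extv_notmem b hi.2]

lemma extv_neg {d : ℕ} (s : Finset (Fin d)) (a : {i // i ∈ s} → ℝ) :
    extv s (-a) = -(extv s a) := by
  funext i
  by_cases h : i ∈ s <;> simp [extv, h]

-- ### RIP constant facts ###

lemma ripSet_nonempty {n d : ℕ} (Φ : Matrix (Fin n) (Fin d) ℝ) (t : ℕ) :
    {δ : ℝ | 0 ≤ δ ∧ satRIP Φ t δ}.Nonempty := by
  set M : ℝ := ∑ i, ∑ j, Φ i j ^ 2 with hM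
  have hM0 : 0 ≤ M := Finset.sum_nonneg fun i _ => Finset.sum_nonneg fun j _ => sq_nonneg _
  refine ⟨M + 1, by linarith, ?_⟩
  intro x _
  have hup : nsq (Φ.mulVec x) ≤ M * nsq x := by
    have h1 : ∀ i, (∑ j, Φ i j * x j) ^ 2 ≤ (∑ j, Φ i j ^ 2) * ∑ j, x j ^ 2 :=
      fun i => Finset.sum_mul_sq_le_sq_mul_sq _ _ _
    calc nsq (Φ.mulVec x) = ∑ i, (∑ j, Φ i j * x j) ^ 2 := rfl
      _ ≤ ∑ i, (∑ j, Φ i j ^ 2) * ∑ j, x j ^ 2 := Finset.sum_le_sum fun i _ => h1 i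
      _ = M * ∑ j, x j ^ 2 := by rw [hM, Finset.sum_mul]
      _ = M * nsq x := rfl
  constructor
  · nlinarith [nsq_nonneg x, nsq_nonneg (Φ.mulVec x)]
  · nlinarith [nsq_nonneg x]

lemma ripSet_bddBelow {n d : ℕ} (Φ : Matrix (Fin n) (Fin d) ℝ) (t : ℕ) :
    BddBelow {δ : ℝ | 0 ≤ δ ∧ satRIP Φ t δ} := ⟨0, fun _ hδ => hδ.1⟩

lemma ripConst_nonneg {n d : ℕ} (Φ : Matrix (Fin n) (Fin d) ℝ) (t : ℕ) :
    0 ≤ ripConst Φ t :=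
  le_csInf (ripSet_nonempty Φ t) fun _ hδ => hδ.1

lemma satRIP_mono {n d : ℕ} {Φ : Matrix (Fin n) (Fin d) ℝ} {t t' : ℕ} {δ : ℝ}
    (h : satRIP Φ t δ) (ht : t' ≤ t) : satRIP Φ t' δ :=
  fun x hx => h x (le_trans hx ht)

lemma ripConst_mono {n d : ℕ} (Φ : Matrix (Fin n) (Fin d) ℝ) {t t' : ℕ} (h : t' ≤ t) :
    ripConst Φ t' ≤ ripConst Φ t :=
  csInf_le_csInf (ripSet_bddBelow Φ t') (ripSet_nonempty Φ t)
    (fun _ hδ => ⟨hδ.1, satRIP_mono hδ.2 h⟩)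

lemma satRIP_ripConst {n d : ℕ} (Φ : Matrix (Fin n) (Fin d) ℝ) (t : ℕ) :
    satRIP Φ t (ripConst Φ t) := by
  have hclosed : IsClosed {δ : ℝ | 0 ≤ δ ∧ satRIP Φ t δ} := by
    have heq : {δ : ℝ | 0 ≤ δ ∧ satRIP Φ t δ} =
        Set.Ici (0:ℝ) ∩ ⋂ (x : Fin d → ℝ) (_ : sparsity x ≤ t),
          ({δ : ℝ | (1 - δ) * nsq x ≤ nsq (Φ.mulVec x)} ∩
           {δ : ℝ | nsq (Φ.mulVec x) ≤ (1 + δ) * nsq x}) := by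
      ext δ
      constructor
      · rintro ⟨h0, h⟩
        exact ⟨h0, Set.mem_iInter.mpr fun x => Set.mem_iInter.mpr fun hx =>
          ⟨(h x hx).1, (h x hx).2⟩⟩
      · rintro ⟨h0, h⟩
        refine ⟨h0, fun x hx => ?_⟩
        have := Set.mem_iInter.mp (Set.mem_iInter.mp h x) hx
        exact ⟨this.1, this.2⟩
    rw [heq]
    refine isClosed_Ici.inter (isClosed_iInter fun x => isClosed_iInter fun _ =>
      IsClosed.inter ?_ ?_)
    · exact isClosed_le (by fun_prop) continuous_const
    · exact isClosed_le continuous_const (by fun_prop)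
  exact (IsClosed.csInf_mem hclosed (ripSet_nonempty Φ t) (ripSet_bddBelow Φ t)).2

-- ### cross-correlation lemmas ###

lemma cross0 {n d : ℕ} {Φ : Matrix (Fin n) (Fin d) ℝ} {t : ℕ} {δ : ℝ}
    (hR : satRIP Φ t δ) {l s : Finset (Fin d)} (hdisj : Disjoint l s)
    (ht : l.card + s.card ≤ t) (b : {i // i ∈ l} → ℝ) (a : {i // i ∈ s} → ℝ) :
    (cols Φ l).mulVec b ⬝ᵥ (cols Φ s).mulVec a ≤ δ / 2 * (nsq b + nsq a) := by
  have hsp1 : sparsity (extv l b + extv s a) ≤ t :=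
    le_trans (sparsity_extv_add l s b a) ht
  have hsp2 : sparsity (extv l b + extv s (-a)) ≤ t :=
    le_trans (sparsity_extv_add l s b (-a)) ht
  have h1 := hR _ hsp1
  have h2 := hR _ hsp2
  have hnsq1 : nsq (extv l b + extv s a) = nsq b + nsq a := by
    simp only [nsq_eq_dot, dotProduct_add, add_dotProduct]
    rw [dot_extv_disj hdisj b a, dot_extv_disj hdisj.symm a b, dot_extv_same, dot_extv_same]
    ring
  have hnsq2 : nsq (extv l b + extv s (-a)) = nsq b + nsq a := by
    simp only [nsq_eq_dot, dotProduct_add, add_dotProduct]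
    rw [dot_extv_disj hdisj b (-a), dot_extv_disj hdisj.symm (-a) b, dot_extv_same,
      dot_extv_same]
    have : (-a) ⬝ᵥ (-a) = a ⬝ᵥ a := by simp
    rw [this]; ring
  have hmv1 : Φ.mulVec (extv l b + extv s a) =
      (cols Φ l).mulVec b + (cols Φ s).mulVec a := by
    rw [Matrix.mulVec_add, mulVec_extv, mulVec_extv]
  have hmv2 : Φ.mulVec (extv l b + extv s (-a)) =
      (cols Φ l).mulVec b - (cols Φ s).mulVec a := by
    rw [Matrix.mulVec_add, mulVec_extv, mulVec_extv, Matrix.mulVec_neg]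
    abel
  have hkey := nsq_add_sub ((cols Φ l).mulVec b) ((cols Φ s).mulVec a)
  rw [hnsq1, hmv1] at h1
  rw [hnsq2, hmv2] at h2
  nlinarith [h1.2, h2.1]

lemma cross {n d : ℕ} {Φ : Matrix (Fin n) (Fin d) ℝ} {t : ℕ} {δ : ℝ}
    (hR : satRIP Φ t δ) (hδ0 : 0 ≤ δ) {l s : Finset (Fin d)} (hdisj : Disjoint l s)
    (ht : l.card + s.card ≤ t) (b : {i // i ∈ l} → ℝ) (a : {i // i ∈ s} → ℝ) :
    (cols Φ l).mulVec b ⬝ᵥ (cols Φ s).mulVec a ≤ δ * l2 b * l2 a := by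
  rcases eq_or_ne (l2 b) 0 with hb | hb
  · have hb0 : b = 0 := l2_eq_zero_iff.mp hb
    rw [hb0]; simp only [Matrix.mulVec_zero, zero_dotProduct]
    exact mul_nonneg (mul_nonneg hδ0 (l2_nonneg _)) (l2_nonneg _)
  rcases eq_or_ne (l2 a) 0 with ha | ha
  · have ha0 : a = 0 := l2_eq_zero_iff.mp ha
    rw [ha0]; simp only [Matrix.mulVec_zero, dotProduct_zero]
    exact mul_nonneg (mul_nonneg hδ0 (l2_nonneg _)) (l2_nonneg _)
  have hb' : 0 < l2 b := lt_of_le_of_ne (l2_nonneg b) (Ne.symm hb)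
  have ha' : 0 < l2 a := lt_of_le_of_ne (l2_nonneg a) (Ne.symm ha)
  set c : ℝ := Real.sqrt (l2 a / l2 b) with hcdef
  have hc : 0 < c := Real.sqrt_pos.mpr (div_pos ha' hb')
  have hc2 : c ^ 2 = l2 a / l2 b := Real.sq_sqrt (le_of_lt (div_pos ha' hb'))
  have key := cross0 hR hdisj ht (c • b) (c⁻¹ • a)
  have eL : (cols Φ l).mulVec (c • b) ⬝ᵥ (cols Φ s).mulVec (c⁻¹ • a) =
      (cols Φ l).mulVec b ⬝ᵥ (cols Φ s).mulVec a := by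
    rw [Matrix.mulVec_smul, Matrix.mulVec_smul, smul_dotProduct, dotProduct_smul,
      smul_eq_mul, smul_eq_mul, ← mul_assoc, mul_inv_cancel₀ (ne_of_gt hc), one_mul]
  have eR : δ / 2 * (nsq (c • b) + nsq (c⁻¹ • a)) = δ * l2 b * l2 a := by
    rw [nsq_smul, nsq_smul, hc2, ← l2_sq b, ← l2_sq a, inv_pow, hc2]
    field_simp
    ring
  rw [eL, eR] at key
  exact key

lemma cross_norm {n d : ℕ} {Φ : Matrix (Fin n) (Fin d) ℝ} {t : ℕ} {δ : ℝ}
    (hR : satRIP Φ t δ) (hδ0 : 0 ≤ δ) {l s : Finset (Fin d)} (hdisj : Disjoint l s)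
    (ht : l.card + s.card ≤ t) (a : {i // i ∈ s} → ℝ) :
    l2 ((cols Φ l)ᵀ.mulVec ((cols Φ s).mulVec a)) ≤ δ * l2 a := by
  set z := (cols Φ l)ᵀ.mulVec ((cols Φ s).mulVec a) with hz
  have h1 : nsq z = (cols Φ l).mulVec z ⬝ᵥ (cols Φ s).mulVec a := by
    rw [nsq_eq_dot]
    conv_lhs => rw [hz]
    rw [Matrix.dotProduct_mulVec, Matrix.vecMul_transpose]
  have h2 := cross hR hδ0 hdisj ht z a
  rcases eq_or_lt_of_le (l2_nonneg z) with h0 | h0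
  · rw [← h0]; exact mul_nonneg hδ0 (l2_nonneg a)
  · have h3 : l2 z ^ 2 ≤ δ * l2 z * l2 a := by rw [l2_sq, h1]; exact h2
    nlinarith [l2_nonneg a]

-- ### Gram matrix lemmas ###

lemma lower_single {n d : ℕ} {Φ : Matrix (Fin n) (Fin d) ℝ} {l : Finset (Fin d)} {δ : ℝ}
    (hR : satRIP Φ l.card δ) (c : {i // i ∈ l} → ℝ) :
    (1 - δ) * nsq c ≤ nsq ((cols Φ l).mulVec c) := by
  have h := hR (extv l c) (sparsity_le (fun i hi => extv_notmem c hi))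
  rw [mulVec_extv, nsq_extv] at h
  exact h.1

lemma G_isUnit {n d : ℕ} {Φ : Matrix (Fin n) (Fin d) ℝ} {l : Finset (Fin d)} {δ : ℝ}
    (hR : satRIP Φ l.card δ) (hδ : δ < 1) :
    IsUnit ((cols Φ l)ᵀ * cols Φ l).det := by
  have hpd : ((cols Φ l)ᵀ * cols Φ l).PosDef := by
    have hherm : ((cols Φ l)ᵀ * cols Φ l).IsHermitian := by
      have hct : (cols Φ l)ᴴ = (cols Φ l)ᵀ := by ext i j; simp
      rw [← hct]; exact Matrix.isHermitian_conjTranspose_mul_self _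
    refine Matrix.PosDef.of_dotProduct_mulVec_pos hherm fun x hx => ?_
    have h1 : star x ⬝ᵥ (((cols Φ l)ᵀ * cols Φ l).mulVec x) = nsq ((cols Φ l).mulVec x) := by
      have hsx : star x = x := by funext i; simp
      rw [hsx, ← Matrix.mulVec_mulVec, Matrix.dotProduct_mulVec, Matrix.vecMul_transpose,
        nsq_eq_dot]
    have h2 : 0 < nsq x := by
      rcases eq_or_lt_of_le (nsq_nonneg x) with h0 | h0
      · exact absurd (nsq_eq_zero_iff.mp h0.symm) hx
      · exact h0
    rw [h1]
    calc (0:ℝ) < (1 - δ) * nsq x := by nlinarith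
      _ ≤ nsq ((cols Φ l).mulVec x) := lower_single hR x
  exact (Matrix.isUnit_iff_isUnit_det _).mp hpd.isUnit

lemma inv_bound {n d : ℕ} {Φ : Matrix (Fin n) (Fin d) ℝ} {l : Finset (Fin d)} {δ : ℝ}
    (hR : satRIP Φ l.card δ) (hδ : δ < 1) (z : {i // i ∈ l} → ℝ) :
    l2 ((((cols Φ l)ᵀ * cols Φ l)⁻¹).mulVec z) ≤ l2 z / (1 - δ) := by
  set G := (cols Φ l)ᵀ * cols Φ l with hG
  set y := G⁻¹.mulVec z with hy
  have hGy : G.mulVec y = z := by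
    rw [hy, Matrix.mulVec_mulVec, Matrix.mul_nonsing_inv _ (G_isUnit hR hδ),
      Matrix.one_mulVec]
  have h1 : (1 - δ) * nsq y ≤ y ⬝ᵥ z := by
    calc (1 - δ) * nsq y ≤ nsq ((cols Φ l).mulVec y) := lower_single hR y
      _ = y ⬝ᵥ G.mulVec y := by
          rw [hG, ← Matrix.mulVec_mulVec, Matrix.dotProduct_mulVec, Matrix.vecMul_transpose,
            nsq_eq_dot]
      _ = y ⬝ᵥ z := by rw [hGy]
  have h2 : y ⬝ᵥ z ≤ l2 y * l2 z := cauchy _ _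
  rw [le_div_iff₀ (by linarith : (0:ℝ) < 1 - δ)]
  rcases eq_or_lt_of_le (l2_nonneg y) with h0 | h0
  · rw [← h0]; simpa using l2_nonneg z
  · nlinarith [l2_sq y]

/-- for `l` disjoint from both `q` and `s`, with
`max{δ_{|s|+|l|}, δ_{|q|+|l|}} < 1`,
`‖Φ_qᵀ P{Φ_l} Φ_s a‖₂ ≤ (δ_{|s|+|l|} δ_{|q|+|l|} / (1 − δ_{|l|})) ‖a‖₂`. -/
theorem stmt3 {n d : ℕ} (Φ : Matrix (Fin n) (Fin d) ℝ) (q s l : Finset (Fin d))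
    (hdisj1 : Disjoint l q) (hdisj2 : Disjoint l s)
    (hδ : max (ripConst Φ (s.card + l.card)) (ripConst Φ (q.card + l.card)) < 1)
    (a : {i // i ∈ s} → ℝ) :
    l2 ((cols Φ q)ᵀ.mulVec ((proj Φ l).mulVec ((cols Φ s).mulVec a))) ≤
      ripConst Φ (s.card + l.card) * ripConst Φ (q.card + l.card) /
        (1 - ripConst Φ l.card) * l2 a := by
  have hsl1 : ripConst Φ (s.card + l.card) < 1 := lt_of_le_of_lt (le_max_left _ _) hδ
  have hql1 : ripConst Φ (q.card + l.card) < 1 := lt_of_le_of_lt (le_max_right _ _) hδ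
  have hδl_le : ripConst Φ l.card ≤ ripConst Φ (s.card + l.card) :=
    ripConst_mono Φ (Nat.le_add_left _ _)
  have hδl1 : ripConst Φ l.card < 1 := lt_of_le_of_lt hδl_le hsl1
  have hδl0 : (0:ℝ) < 1 - ripConst Φ l.card := by linarith
  have hRsl := satRIP_ripConst Φ (s.card + l.card)
  have hRql := satRIP_ripConst Φ (q.card + l.card)
  have hRl := satRIP_ripConst Φ l.card
  have hsl0 := ripConst_nonneg Φ (s.card + l.card)
  have hql0 := ripConst_nonneg Φ (q.card + l.card)
  set z := (cols Φ l)ᵀ.mulVec ((cols Φ s).mulVec a) with hz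
  set w := (((cols Φ l)ᵀ * cols Φ l)⁻¹).mulVec z with hw
  have hproj : (proj Φ l).mulVec ((cols Φ s).mulVec a) = (cols Φ l).mulVec w := by
    rw [hw, hz, proj, ← Matrix.mulVec_mulVec, ← Matrix.mulVec_mulVec]
  rw [hproj]
  have h1 : l2 ((cols Φ q)ᵀ.mulVec ((cols Φ l).mulVec w)) ≤
      ripConst Φ (q.card + l.card) * l2 w :=
    cross_norm hRql hql0 hdisj1.symm le_rfl w
  have h2 : l2 w ≤ l2 z / (1 - ripConst Φ l.card) := inv_bound hRl hδl1 z
  have h3 : l2 z ≤ ripConst Φ (s.card + l.card) * l2 a := by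
    rw [hz]
    exact cross_norm hRsl hsl0 hdisj2 (le_of_eq (Nat.add_comm _ _)) a
  calc l2 ((cols Φ q)ᵀ.mulVec ((cols Φ l).mulVec w))
      ≤ ripConst Φ (q.card + l.card) * l2 w := h1
    _ ≤ ripConst Φ (q.card + l.card) * (l2 z / (1 - ripConst Φ l.card)) :=
        mul_le_mul_of_nonneg_left h2 hql0
    _ ≤ ripConst Φ (q.card + l.card) *
        (ripConst Φ (s.card + l.card) * l2 a / (1 - ripConst Φ l.card)) := by
        apply mul_le_mul_of_nonneg_left _ hql0
        gcongr
    _ = ripConst Φ (s.card + l.card) * ripConst Φ (q.card + l.card) /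
        (1 - ripConst Φ l.card) * l2 a := by ring
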